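/- Let θ ∈ [0, π/2), p ∈ (1, ∞) with |1 − 2/p| < cos θ, φ = arccos|1 − 2/p|. Let R_s, B_s be real symmetric d×d matrices with R_s positive semidefinite and |(B_s ξ, ξ)| ≤ (tan θ)(R_s ξ, ξ) for all ξ ∈ ℝ^d. Then for all ξ', η ∈ ℝ^d: |(B_s ξ', ξ') + (B_s η, η) − ((p−2)/√(p−1))(R_s ξ', η)| ≤ tan(π/2 − φ + θ)((R_s ξ', ξ') + (R_s η, η) + ((p−2)/√(p−1))(B_s ξ', η)). -/

import Mathlib

open Matrix

lemma core0 (A U lam s1 c1 s2 c2 : ℝ) (hc1 : 0 < c1) (hc2 : 0 < c2)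
    (hs2 : 0 ≤ s2) (hlam0 : 0 ≤ lam) (hlam : lam * c1 = s1)
    (hD : s1 * s2 < c1 * c2) (hA : 0 ≤ A)
    (hU1 : c2 * U ≤ s2 * A) (hU2 : -(c2 * U) ≤ s2 * A) :
    |U - lam * A| * (c1 * c2 - s1 * s2) ≤ (s1 * c2 + c1 * s2) * (A + lam * U) := by
  have hc2lam : 0 < c2 - lam * s2 := by nlinarith
  rcases abs_cases (U - lam * A) with ⟨he, _⟩ | ⟨he, _⟩ <;> rw [he] <;> subst hlam
  · rcases le_or_gt ((lam^2 - 1)*c2 + 2*lam*s2) 0 with hK | hK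
    · nlinarith [mul_nonneg hc1.le (mul_nonneg (sub_nonneg.2 hU1) (neg_nonneg.2 hK)),
        mul_nonneg hc1.le (mul_nonneg (mul_nonneg hlam0 hA) (by positivity : (0:ℝ) ≤ c2^2 + s2^2)),
        hc2]
    · nlinarith [mul_nonneg hc1.le (mul_nonneg (by linarith : 0 ≤ s2*A + c2*U) hK.le),
        mul_nonneg hc1.le (mul_nonneg (mul_nonneg hA hc2lam.le) (by positivity : (0:ℝ) ≤ lam*c2 + s2)),
        hc2]
  · nlinarith [mul_nonneg hc1.le (mul_nonneg (by positivity : (0:ℝ) ≤ 1 + lam^2) (by linarith : 0 ≤ s2*A + c2*U)), hc2]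

lemma core (A U lam s1 c1 s2 c2 : ℝ) (hc1 : 0 < c1) (hc2 : 0 < c2)
    (hs2 : 0 ≤ s2) (hlam : |lam| * c1 = s1)
    (hD : s1 * s2 < c1 * c2) (hA : 0 ≤ A)
    (hU : c2 * |U| ≤ s2 * A) :
    |U - lam * A| * (c1 * c2 - s1 * s2) ≤ (s1 * c2 + c1 * s2) * (A + lam * U) := by
  have hU1 : c2 * U ≤ s2 * A := le_trans (by nlinarith [le_abs_self U]) hU
  have hU2 : -(c2 * U) ≤ s2 * A := le_trans (by nlinarith [neg_abs_le U]) hU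
  rcases le_or_gt 0 lam with h | h
  · exact core0 A U lam s1 c1 s2 c2 hc1 hc2 hs2 h (by rwa [abs_of_nonneg h] at hlam) hD hA hU1 hU2
  · have := core0 A (-U) (-lam) s1 c1 s2 c2 hc1 hc2 hs2 (by linarith)
      (by rwa [abs_of_neg h] at hlam) hD hA (by linarith) (by linarith)
    have e1 : |U - lam * A| = |(-U) - (-lam) * A| := by
      rw [show (-U) - (-lam)*A = -(U - lam*A) by ring, abs_neg]
    have e2 : A + lam * U = A + (-lam) * (-U) := by ring
    rw [e1, e2]; exact this

lemma symm_dot {d : ℕ} (M : Matrix (Fin d) (Fin d) ℝ) (hM : M.IsSymm) (x y : Fin d → ℝ) :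
    M.mulVec x ⬝ᵥ y = M.mulVec y ⬝ᵥ x := by
  rw [dotProduct_comm, Matrix.dotProduct_mulVec, ← Matrix.mulVec_transpose, hM.eq]

set_option maxHeartbeats 1000000 in
theorem stmt_12 (d : ℕ) (p θ : ℝ) (hp : 1 < p)
    (hθ : θ ∈ Set.Ico 0 (Real.pi / 2))
    (hpθ : |1 - 2 / p| < Real.cos θ)
    (Rs Bs : Matrix (Fin d) (Fin d) ℝ)
    (hRsym : Rs.IsSymm) (hBsym : Bs.IsSymm)
    (hpos : ∀ ξ : Fin d → ℝ, 0 ≤ Rs.mulVec ξ ⬝ᵥ ξ)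
    (hdom : ∀ ξ : Fin d → ℝ, |Bs.mulVec ξ ⬝ᵥ ξ| ≤ Real.tan θ * (Rs.mulVec ξ ⬝ᵥ ξ)) :
    ∀ ξ' η : Fin d → ℝ,
      |Bs.mulVec ξ' ⬝ᵥ ξ' + Bs.mulVec η ⬝ᵥ η
          - ((p - 2) / Real.sqrt (p - 1)) * (Rs.mulVec ξ' ⬝ᵥ η)| ≤
        Real.tan (Real.pi / 2 - Real.arccos |1 - 2 / p| + θ) *
          (Rs.mulVec ξ' ⬝ᵥ ξ' + Rs.mulVec η ⬝ᵥ η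
            + ((p - 2) / Real.sqrt (p - 1)) * (Bs.mulVec ξ' ⬝ᵥ η)) := by
  intro ξ' η
  have hp0 : (0:ℝ) < p := by linarith
  set c := |1 - 2/p| with hc
  have hc0 : 0 ≤ c := abs_nonneg _
  have hc1lt : c < 1 := lt_of_lt_of_le hpθ (Real.cos_le_one θ)
  have hπ := Real.pi_pos
  have hc2 : 0 < Real.cos θ := Real.cos_pos_of_mem_Ioo ⟨by linarith [hθ.1], hθ.2⟩
  have hs2 : 0 ≤ Real.sin θ := Real.sin_nonneg_of_nonneg_of_le_pi hθ.1 (by linarith [hθ.2])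
  set q := Real.sqrt (p - 1) with hqdef
  have hq0 : 0 < q := Real.sqrt_pos.2 (by linarith)
  have hq2 : q ^ 2 = p - 1 := Real.sq_sqrt (by linarith)
  set c1 := Real.sqrt (1 - c ^ 2) with hc1def
  have hc1pos : 0 < c1 := Real.sqrt_pos.2 (by nlinarith)
  have hc1eq : c1 = 2 * q / p := by
    rw [hc1def, show 1 - c ^ 2 = (2 * q / p) ^ 2 by
      rw [show c ^ 2 = (1 - 2/p)^2 from sq_abs _]; field_simp; nlinarith]
    exact Real.sqrt_sq (by positivity)
  set lam := (p - 2) / (2 * q) with hlamdef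
  have hlam : |lam| * c1 = c := by
    rw [hlamdef, hc1eq, abs_div, abs_of_pos (by positivity : (0:ℝ) < 2*q), hc,
      show (1 : ℝ) - 2/p = (p-2)/p by field_simp, abs_div, abs_of_pos hp0]
    field_simp
  have hφle : Real.arccos c ≤ Real.pi / 2 := (Real.arccos_le_pi_div_two).2 hc0
  have hθφ : θ < Real.arccos c := by
    have h1 : Real.arccos (Real.cos θ) < Real.arccos c :=
      Real.strictAntiOn_arccos ⟨by linarith, hc1lt.le⟩ ⟨by linarith, Real.cos_le_one θ⟩ hpθ
    rwa [Real.arccos_cos hθ.1 (by linarith [hθ.2])] at h1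
  have hsin : Real.sin (Real.pi/2 - Real.arccos c) = c := by
    rw [Real.sin_pi_div_two_sub, Real.cos_arccos (by linarith) hc1lt.le]
  have hcos : Real.cos (Real.pi/2 - Real.arccos c) = c1 := by
    rw [Real.cos_pi_div_two_sub, Real.sin_arccos]
  have hD : c * Real.sin θ < c1 * Real.cos θ := by
    have hmem : Real.pi/2 - Real.arccos c + θ ∈ Set.Ioo (-(Real.pi/2)) (Real.pi/2) := by
      constructor
      · have := Real.arccos_le_pi c; linarith [hθ.1]
      · linarith
    have := Real.cos_pos_of_mem_Ioo hmem
    rw [Real.cos_add, hsin, hcos] at this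
    linarith
  -- domination in sin/cos form
  have hdom' : ∀ ξ : Fin d → ℝ,
      Real.cos θ * |Bs.mulVec ξ ⬝ᵥ ξ| ≤ Real.sin θ * (Rs.mulVec ξ ⬝ᵥ ξ) := by
    intro ξ
    have h := hdom ξ
    rw [Real.tan_eq_sin_div_cos] at h
    have := mul_le_mul_of_nonneg_left h hc2.le
    calc Real.cos θ * |Bs.mulVec ξ ⬝ᵥ ξ| ≤ Real.cos θ * (Real.sin θ / Real.cos θ * (Rs.mulVec ξ ⬝ᵥ ξ)) := this
      _ = Real.sin θ * (Rs.mulVec ξ ⬝ᵥ ξ) := by field_simp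
  -- abbreviations
  set a := Rs.mulVec ξ' ⬝ᵥ ξ' with ha
  set b := Rs.mulVec η ⬝ᵥ η with hb
  set r := Rs.mulVec ξ' ⬝ᵥ η with hr
  set u := Bs.mulVec ξ' ⬝ᵥ ξ' with hu
  set v := Bs.mulVec η ⬝ᵥ η with hv
  set s := Bs.mulVec ξ' ⬝ᵥ η with hs
  have hA1 : Rs.mulVec (ξ' + η) ⬝ᵥ (ξ' + η) = a + b + 2*r := by
    simp only [Matrix.mulVec_add, add_dotProduct, dotProduct_add]
    rw [symm_dot Rs hRsym η ξ']; simp only [ha, hb, hr]; ring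
  have hA2 : Rs.mulVec (ξ' - η) ⬝ᵥ (ξ' - η) = a + b - 2*r := by
    simp only [Matrix.mulVec_sub, sub_dotProduct, dotProduct_sub]
    rw [symm_dot Rs hRsym η ξ']; simp only [ha, hb, hr]; ring
  have hU1 : Bs.mulVec (ξ' + η) ⬝ᵥ (ξ' + η) = u + v + 2*s := by
    simp only [Matrix.mulVec_add, add_dotProduct, dotProduct_add]
    rw [symm_dot Bs hBsym η ξ']; simp only [hu, hv, hs]; ring
  have hU2 : Bs.mulVec (ξ' - η) ⬝ᵥ (ξ' - η) = u + v - 2*s := by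
    simp only [Matrix.mulVec_sub, sub_dotProduct, dotProduct_sub]
    rw [symm_dot Bs hBsym η ξ']; simp only [hu, hv, hs]; ring
  have k1 := core (a + b + 2*r) (u + v + 2*s) lam c c1 (Real.sin θ) (Real.cos θ)
    hc1pos hc2 hs2 hlam hD (hA1 ▸ hpos (ξ' + η)) (by rw [← hA1, ← hU1]; exact hdom' (ξ' + η))
  have k2 := core (a + b - 2*r) (u + v - 2*s) (-lam) c c1 (Real.sin θ) (Real.cos θ)
    hc1pos hc2 hs2 (by rwa [abs_neg]) hD (hA2 ▸ hpos (ξ' - η))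
    (by rw [← hA2, ← hU2]; exact hdom' (ξ' - η))
  have hγ : (p - 2) / Real.sqrt (p - 1) = 2 * lam := by
    rw [hlamdef, ← hqdef]; field_simp
  rw [hγ, Real.tan_eq_sin_div_cos, Real.sin_add, Real.cos_add, hsin, hcos,
    div_mul_eq_mul_div, le_div_iff₀ (by linarith : (0:ℝ) < c1 * Real.cos θ - c * Real.sin θ)]
  have habs : |2 * (u + v - 2 * lam * r)| ≤ |u + v + 2*s - lam * (a + b + 2*r)| +
      |u + v - 2*s - (-lam) * (a + b - 2*r)| := by
    rw [show 2 * (u + v - 2 * lam * r) = (u + v + 2*s - lam * (a + b + 2*r)) +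
      (u + v - 2*s - (-lam) * (a + b - 2*r)) by ring]
    exact abs_add_le _ _
  have habs2 : |2 * (u + v - 2 * lam * r)| = 2 * |u + v - 2 * lam * r| := by
    rw [abs_mul, abs_of_pos (by norm_num : (0:ℝ) < 2)]
  nlinarith [mul_le_mul_of_nonneg_right habs (by linarith : (0:ℝ) ≤ c1 * Real.cos θ - c * Real.sin θ)]
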